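/- Let A be a unital complex C*-algebra and let a, b ∈ A with a selfadjoint. Then exp(i·a)·b − b·exp(i·a) = i · ∫₀¹ exp(s·i·a) · (a·b − b·a) · exp((1−s)·i·a) ds, where exp is the exponential in A and the integral is the Bochner (interval) integral of the continuous map s ↦ exp(s·i·a)·(ab − ba)·exp((1−s)·i·a). -/

import Mathlib

open MeasureTheory

/-- **Duhamel's formula.** For a selfadjoint element `a` and any `b` in a unital
complex C*-algebra,
`e^{ia}·b − b·e^{ia} = i·∫₀¹ e^{s·ia}·(ab − ba)·e^{(1−s)·ia} ds`. -/
theorem duhamel_commutator_exp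
    {A : Type*} [CStarAlgebra A] (a b : A) (ha : IsSelfAdjoint a) :
    NormedSpace.exp (Complex.I • a) * b - b * NormedSpace.exp (Complex.I • a)
      = Complex.I •
        ∫ s in (0:ℝ)..1,
          NormedSpace.exp (((s : ℂ) * Complex.I) • a) * (a * b - b * a) *
            NormedSpace.exp ((((1 : ℂ) - (s : ℂ)) * Complex.I) • a) := by
  set x : A := Complex.I • a with hx
  have hsx : ∀ s : ℝ, ((s : ℂ) * Complex.I) • a = s • x := by
    intro s
    rw [hx, mul_smul, Complex.coe_smul]
  have hsx' : ∀ s : ℝ, (((1 : ℂ) - (s : ℂ)) * Complex.I) • a = (1 - s) • x := by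
    intro s
    rw [hx, mul_smul, show ((1 : ℂ) - (s : ℂ)) = ((1 - s : ℝ) : ℂ) by push_cast; ring,
      Complex.coe_smul]
  -- the function whose derivative we compute
  set f : ℝ → A := fun s => NormedSpace.exp (s • x) * b * NormedSpace.exp ((1 - s) • x)
    with hf
  set g : ℝ → A := fun s =>
      NormedSpace.exp (s • x) * (x * b - b * x) * NormedSpace.exp ((1 - s) • x) with hg
  have hcomm : ∀ t : ℝ, x * NormedSpace.exp (t • x) = NormedSpace.exp (t • x) * x := by
    intro t
    exact (((Commute.refl x).smul_right t).exp_right).eq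
  have hee : (NormedSpace.exp : A → A) = NormedSpace.exp :=
    rfl
  have hderiv : ∀ s : ℝ, HasDerivAt f (g s) s := by
    intro s
    have h1 : HasDerivAt (fun u : ℝ => NormedSpace.exp (u • x))
        (NormedSpace.exp (s • x) * x) s := by
      simpa [hee] using hasDerivAt_exp_smul_const (𝕂 := ℝ) x s
    have h2 : HasDerivAt (fun u : ℝ => NormedSpace.exp ((1 - u) • x))
        (-(NormedSpace.exp ((1 - s) • x) * x)) s := by
      have h0 : HasDerivAt (fun u : ℝ => 1 - u) (-1) s := by
        simpa using (hasDerivAt_id s).const_sub (1 : ℝ)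
      have := (hasDerivAt_exp_smul_const (𝕂 := ℝ) x (1 - s)).scomp s h0
      simpa [hee, Function.comp_def] using this
    have := ((h1.mul_const b).mul h2)
    convert this using 1
    show NormedSpace.exp (s • x) * (x * b - b * x) * NormedSpace.exp ((1 - s) • x)
        = NormedSpace.exp (s • x) * x * b * NormedSpace.exp ((1 - s) • x) +
          NormedSpace.exp (s • x) * b * -(NormedSpace.exp ((1 - s) • x) * x)
    rw [mul_neg, ← sub_eq_add_neg, ← hcomm (1 - s)]
    noncomm_ring
    rfl
  have hgcont : Continuous g := by
    let +nondep : NormedAlgebra ℚ A := .restrictScalars ℚ ℂ A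
    have hc : Continuous fun s : ℝ => NormedSpace.exp (s • x) := by
      exact (NormedSpace.exp_continuous).comp (continuous_id.smul continuous_const)
    have hc' : Continuous fun s : ℝ => NormedSpace.exp ((1 - s) • x) := by
      exact (NormedSpace.exp_continuous).comp
        (((continuous_const.sub continuous_id)).smul continuous_const)
    exact (hc.mul continuous_const).mul hc'
  have hint : f 1 - f 0 = ∫ s in (0:ℝ)..1, g s := by
    exact (intervalIntegral.integral_eq_sub_of_hasDerivAt
      (fun s _ => hderiv s) (hgcont.intervalIntegrable 0 1)).symm
  have hxb : x * b - b * x = Complex.I • (a * b - b * a) := by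
    rw [hx]; simp [smul_sub, smul_mul_assoc, mul_smul_comm]
  have hgi : ∀ s : ℝ, g s = Complex.I •
      (NormedSpace.exp (((s : ℂ) * Complex.I) • a) * (a * b - b * a) *
        NormedSpace.exp ((((1 : ℂ) - (s : ℂ)) * Complex.I) • a)) := by
    intro s
    rw [hg, hxb, hsx, hsx']
    simp [smul_mul_assoc, mul_smul_comm]
  calc NormedSpace.exp (Complex.I • a) * b - b * NormedSpace.exp (Complex.I • a)
      = f 1 - f 0 := by
        rw [hf]; simp [hx]
    _ = ∫ s in (0:ℝ)..1, g s := hint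
    _ = ∫ s in (0:ℝ)..1, Complex.I •
          (NormedSpace.exp (((s : ℂ) * Complex.I) • a) * (a * b - b * a) *
            NormedSpace.exp ((((1 : ℂ) - (s : ℂ)) * Complex.I) • a)) := by
        simp only [hgi]
    _ = Complex.I • ∫ s in (0:ℝ)..1,
          NormedSpace.exp (((s : ℂ) * Complex.I) • a) * (a * b - b * a) *
            NormedSpace.exp ((((1 : ℂ) - (s : ℂ)) * Complex.I) • a) := by
        rw [intervalIntegral.integral_smul]
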